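/- The particular solution x_p = M·(A')*·b is a least-squares solution: for every vector x ∈ ℂ^n, the Euclidean norm satisfies ‖A·x_p − b‖ ≤ ‖A·x − b‖. -/

import Mathlib

open Matrix

/-- The Euclidean norm of a vector in `ℂ^m`. -/
noncomputable def euclNorm {m : ℕ} (v : Fin m → ℂ) : ℝ :=
  ‖(WithLp.equiv 2 (Fin m → ℂ)).symm v‖

/-- Least-squares property of the column-based particular solution
`x_p = M A'ᴴ b`: its residual `A x_p − b` has Euclidean norm no larger than the
residual of any other vector. -/
theorem col_particular_solution_least_squares {m n : ℕ}
    (A : Matrix (Fin m) (Fin n) ℂ) (b : Fin m → ℂ)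
    (M : Matrix (Fin n) (Fin n) ℂ) (hM : IsUnit M)
    (A' : Matrix (Fin m) (Fin n) ℂ) (hA' : A' = A * M)
    (S : Finset (Fin n))
    (hQO : A'ᴴ * A' = Matrix.diagonal (fun j => if j ∈ S then (1 : ℂ) else 0)) :
    ∀ x : Fin n → ℂ,
      euclNorm (A *ᵥ (M *ᵥ (A'ᴴ *ᵥ b)) - b) ≤ euclNorm (A *ᵥ x - b) := by
  intro x
  have hMdet : IsUnit M.det := (Matrix.isUnit_iff_isUnit_det M).mp hM
  -- columns of A' outside S vanish
  have hcol : ∀ j ∉ S, ∀ i, A' i j = 0 := by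
    intro j hj i
    have h := congrFun (congrFun hQO j) j
    simp [Matrix.mul_apply, Matrix.conjTranspose_apply, Matrix.diagonal_apply, hj] at h
    have h2 : ∑ i, (Complex.normSq (A' i j) : ℂ) = 0 := by
      rw [← h]; congr 1; ext i; rw [Complex.normSq_eq_conj_mul_self]
    have h3 : ∑ i, Complex.normSq (A' i j) = 0 := by exact_mod_cast h2
    have := (Finset.sum_eq_zero_iff_of_nonneg (fun i _ => Complex.normSq_nonneg _)).mp h3 i
      (Finset.mem_univ i)
    exact Complex.normSq_eq_zero.mp this
  set D : Matrix (Fin n) (Fin n) ℂ :=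
    Matrix.diagonal (fun j => if j ∈ S then (1 : ℂ) else 0) with hD
  have hDA : D * A'ᴴ = A'ᴴ := by
    ext j i
    rw [hD, Matrix.diagonal_mul]
    by_cases hj : j ∈ S
    · simp [hj]
    · simp [hj, Matrix.conjTranspose_apply, hcol j hj i]
  -- residual
  set r : Fin m → ℂ := A' *ᵥ (A'ᴴ *ᵥ b) - b with hr
  have hAM : ∀ v : Fin n → ℂ, A *ᵥ (M *ᵥ v) = A' *ᵥ v := by
    intro v; rw [hA', ← Matrix.mulVec_mulVec]
  have hrdef : A *ᵥ (M *ᵥ (A'ᴴ *ᵥ b)) - b = r := by rw [hAM]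
  have hAr : A'ᴴ *ᵥ r = 0 := by
    rw [hr, Matrix.mulVec_sub, Matrix.mulVec_mulVec, hQO, Matrix.mulVec_mulVec, hDA]
    simp
  -- decomposition
  set z : Fin n → ℂ := M⁻¹ *ᵥ x - A'ᴴ *ᵥ b with hz
  have hAinv : A' * M⁻¹ = A := by
    rw [hA', Matrix.mul_assoc, Matrix.mul_nonsing_inv M hMdet, Matrix.mul_one]
  have hdecomp : A *ᵥ x - b = r + A' *ᵥ z := by
    rw [hz, Matrix.mulVec_sub, Matrix.mulVec_mulVec, hAinv, hr]
    abel
  -- orthogonality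
  set w : Fin m → ℂ := A' *ᵥ z with hw
  have hinner : ∑ i, (starRingEnd ℂ) (r i) * w i = 0 := by
    have : star r ⬝ᵥ w = (star r ᵥ* A') ⬝ᵥ z := Matrix.dotProduct_mulVec _ _ _
    have h2 : star r ᵥ* A' = 0 := by
      have := congrArg star hAr
      rw [Matrix.star_mulVec] at this
      simpa using this
    have h3 : star r ⬝ᵥ w = 0 := by rw [this, h2, zero_dotProduct]
    simpa [dotProduct, Pi.star_apply] using h3
  -- conclude via inner product space
  rw [hrdef, hdecomp]
  unfold euclNorm
  set r' : EuclideanSpace ℂ (Fin m) := (WithLp.equiv 2 (Fin m → ℂ)).symm r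
  set w' : EuclideanSpace ℂ (Fin m) := (WithLp.equiv 2 (Fin m → ℂ)).symm w
  have hrw : (WithLp.equiv 2 (Fin m → ℂ)).symm (r + w) = r' + w' := rfl
  rw [hrw]
  have hinner' : (inner ℂ r' w' : ℂ) = 0 := by
    simpa [PiLp.inner_apply, RCLike.inner_apply, r', w', mul_comm] using hinner
  have hsq : ‖r' + w'‖ ^ 2 = ‖r'‖ ^ 2 + ‖w'‖ ^ 2 := by
    rw [@norm_add_sq ℂ, hinner']
    simp
  have : ‖r'‖ ^ 2 ≤ ‖r' + w'‖ ^ 2 := by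
    rw [hsq]; nlinarith [norm_nonneg w', sq_nonneg ‖w'‖]
  nlinarith [norm_nonneg r', norm_nonneg (r' + w')]
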